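/- For every integer k with 0 ≤ k ≤ ⌊D/2⌋ there exists a subspace L of ℂ^{𝔽₂^D} of dimension D − 2k + 1 that is invariant under both 𝐀 and 𝐀*, contains no nonzero proper subspace invariant under both 𝐀 and 𝐀*, and has a basis w_0, …, w_{D−2k} such that for all 0 ≤ i ≤ D−2k one has 𝐀·w_i = (D−i−2k+1)·w_{i−1} + (i+1)·w_{i+1} and 𝐀*·w_i = (D − 2(i+k))·w_i, with the conventions w_{−1} = 0 and w_{D−2k+1} = 0. -/

import Mathlib

open Matrix

/-- Vertex set of the hypercube `H(D,2)`: binary words of length `D`. -/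
abbrev Vtx (D : ℕ) := Fin D → ZMod 2

/-- Adjacency matrix of the hypercube `H(D,2)`. -/
noncomputable def adjCube (D : ℕ) : Matrix (Vtx D) (Vtx D) ℂ :=
  fun y z => if hammingNorm (y - z) = 1 then 1 else 0

/-- Dual adjacency matrix of the hypercube with respect to `x₀`. -/
noncomputable def dualCube (D : ℕ) (x₀ : Vtx D) : Matrix (Vtx D) (Vtx D) ℂ :=
  Matrix.diagonal fun y => (D : ℂ) - 2 * hammingNorm (x₀ - y)

/-- A submodule is invariant under (the action by `mulVec` of) a matrix. -/
def MatInvariant {n : Type*} [Fintype n] (M : Matrix n n ℂ) (W : Submodule ℂ (n → ℂ)) : Prop :=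
  ∀ v ∈ W, M.mulVec v ∈ W

open Finset

namespace S17

/-- coordinate of `x₀ - y` (= `x₀ + y`) at a natural-number index -/
def zc {D : ℕ} (x₀ y : Vtx D) (j : ℕ) : ZMod 2 :=
  if h : j < D then x₀ ⟨j, h⟩ + y ⟨j, h⟩ else 0

/-- sign of a pair -/
def ps (a b : ZMod 2) : ℂ :=
  if a = 1 ∧ b = 0 then 1 else if a = 0 ∧ b = 1 then -1 else 0

/-- product of pair signs -/
def Pv {D : ℕ} (k : ℕ) (x₀ y : Vtx D) : ℂ :=
  ∏ m ∈ Finset.range k, ps (zc x₀ y (2*m)) (zc x₀ y (2*m+1))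

/-- count of ones among free coordinates -/
def cnt {D : ℕ} (k : ℕ) (x₀ y : Vtx D) : ℕ :=
  ((Finset.Ico (2*k) D).filter (fun j => zc x₀ y j = 1)).card

/-- the basis vectors -/
def wv {D : ℕ} (k i : ℕ) (x₀ : Vtx D) : Vtx D → ℂ :=
  fun y => Pv k x₀ y * (if cnt k x₀ y = i then 1 else 0)

/-- flip coordinate `j` -/
def flip {D : ℕ} (j : ℕ) (y : Vtx D) : Vtx D :=
  if h : j < D then y + Pi.single ⟨j, h⟩ 1 else y

lemma zmod2_sub : ∀ a b : ZMod 2, a - b = a + b := by decide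

lemma zc_flip {D : ℕ} (x₀ y : Vtx D) {j : ℕ} (hj : j < D) (j' : ℕ) :
    zc x₀ (flip j y) j' = if j' = j then zc x₀ y j' + 1 else zc x₀ y j' := by
  unfold zc flip
  rw [dif_pos hj]
  by_cases h' : j' < D
  · rw [dif_pos h', dif_pos h']
    by_cases e : j' = j
    · subst e
      simp [Pi.single_apply, if_pos rfl, add_assoc]
    · have : (⟨j', h'⟩ : Fin D) ≠ ⟨j, hj⟩ := by simp [Fin.ext_iff, e]
      simp [Pi.single_apply, Fin.ext_iff, e]
  · have e : j' ≠ j := by omega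
    rw [dif_neg h', dif_neg h', if_neg e]

lemma cnt_flip_lo {D k : ℕ} (x₀ y : Vtx D) {j : ℕ} (hj : j < D) (hjk : j < 2*k) :
    cnt k x₀ (flip j y) = cnt k x₀ y := by
  unfold cnt
  congr 1
  apply Finset.filter_congr
  intro j' hj'
  rw [Finset.mem_Ico] at hj'
  rw [zc_flip x₀ y hj, if_neg (by omega)]

lemma Pv_flip_hi {D k : ℕ} (x₀ y : Vtx D) {j : ℕ} (hj : j < D) (hjk : 2*k ≤ j) :
    Pv k x₀ (flip j y) = Pv k x₀ y := by
  unfold Pv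
  apply Finset.prod_congr rfl
  intro m hm
  rw [Finset.mem_range] at hm
  rw [zc_flip x₀ y hj, zc_flip x₀ y hj, if_neg (by omega), if_neg (by omega)]


lemma zmod2_ne_zero : ∀ a : ZMod 2, a ≠ 0 → a = 1 := by decide

lemma hamming_one_iff {D : ℕ} (v : Vtx D) :
    hammingNorm v = 1 ↔ ∃ j : Fin D, v = Pi.single j 1 := by
  constructor
  · intro h
    unfold hammingNorm at h
    rw [Finset.card_eq_one] at h
    obtain ⟨a, ha⟩ := h
    refine ⟨a, funext fun i => ?_⟩
    by_cases e : i = a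
    · subst e
      have : i ∈ ({i} : Finset (Fin D)) := Finset.mem_singleton_self i
      rw [← ha, Finset.mem_filter] at this
      rw [Pi.single_eq_same]
      exact zmod2_ne_zero _ this.2
    · have : i ∉ ({a} : Finset (Fin D)) := by simp [e]
      rw [← ha, Finset.mem_filter] at this
      push_neg at this
      rw [Pi.single_eq_of_ne e]
      by_contra hne
      exact hne (this (Finset.mem_univ i))
  · rintro ⟨j, rfl⟩
    unfold hammingNorm
    rw [Finset.card_eq_one]
    refine ⟨j, ?_⟩
    ext i
    simp [Pi.single_apply]


lemma sub_eq_single_iff {D : ℕ} (y z : Vtx D) (j : Fin D) :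
    y - z = Pi.single j 1 ↔ z = y + Pi.single j 1 := by
  constructor
  · intro h
    funext i
    have h2 := congrFun h i
    rw [Pi.sub_apply, zmod2_sub] at h2
    rw [Pi.add_apply]
    have h4 : ∀ a b c : ZMod 2, a + b = c → b = a + c := by decide
    exact h4 _ _ _ h2
  · rintro rfl
    funext i
    rw [Pi.sub_apply, Pi.add_apply, zmod2_sub]
    have : ∀ a b : ZMod 2, a + (a + b) = b := by decide
    rw [this]

lemma adj_mulVec {D : ℕ} (v : Vtx D → ℂ) (y : Vtx D) :
    (adjCube D).mulVec v y = ∑ j ∈ Finset.range D, v (flip j y) := by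
  have h1 : (adjCube D).mulVec v y = ∑ z ∈ Finset.univ.filter (fun z => hammingNorm (y - z) = 1), v z := by
    rw [Finset.sum_filter]
    simp only [Matrix.mulVec, dotProduct, adjCube, ite_mul, one_mul, zero_mul]
  have h2 : Finset.univ.filter (fun z => hammingNorm (y - z) = 1)
      = Finset.image (fun j : Fin D => y + Pi.single j 1) Finset.univ := by
    ext z
    simp only [Finset.mem_filter, Finset.mem_univ, true_and, Finset.mem_image]
    rw [hamming_one_iff]
    constructor
    · rintro ⟨j, hj⟩; exact ⟨j, ((sub_eq_single_iff y z j).mp hj).symm⟩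
    · rintro ⟨j, hj⟩; exact ⟨j, (sub_eq_single_iff y z j).mpr hj.symm⟩
  rw [h1, h2, Finset.sum_image]
  · rw [← Fin.sum_univ_eq_sum_range (fun j => v (flip j y))]
    apply Finset.sum_congr rfl
    intro j _
    congr 1
    unfold flip
    rw [dif_pos j.isLt]
  · intro a _ b _ h
    have h' : (Pi.single a 1 : Vtx D) = Pi.single b 1 := by
      funext i
      have := congrFun h i
      simp only [Pi.add_apply] at this
      exact add_left_cancel this
    by_contra hne
    have := congrFun h' a
    rw [Pi.single_eq_same, Pi.single_eq_of_ne hne] at this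
    exact one_ne_zero this

lemma sum_range_pair {M : Type*} [AddCommMonoid M] (k : ℕ) (f : ℕ → M) :
    ∑ j ∈ Finset.range (2*k), f j = ∑ m ∈ Finset.range k, (f (2*m) + f (2*m+1)) := by
  induction k with
  | zero => simp
  | succ n ih =>
      have : 2*(n+1) = (2*n+1)+1 := by ring
      rw [this, Finset.sum_range_succ, Finset.sum_range_succ, ih, Finset.sum_range_succ]
      rw [add_assoc]

lemma zmod2_cases : ∀ a : ZMod 2, a = 0 ∨ a = 1 := by decide

lemma ps_cancel : ∀ a b : ZMod 2, ps (a+1) b + ps a (b+1) = 0 := by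
  intro a b
  rcases zmod2_cases a with ha | ha <;> rcases zmod2_cases b with hb | hb <;>
    subst ha <;> subst hb <;> simp (config := { decide := true }) [ps]

lemma pair_cancel {D k i : ℕ} (x₀ y : Vtx D) {m : ℕ} (hm : m < k) (hkD : 2*k ≤ D) :
    wv k i x₀ (flip (2*m) y) + wv k i x₀ (flip (2*m+1) y) = 0 := by
  have h0 : 2*m < D := by omega
  have h1 : 2*m+1 < D := by omega
  unfold wv
  rw [cnt_flip_lo x₀ y h0 (by omega), cnt_flip_lo x₀ y h1 (by omega)]
  have key : Pv k x₀ (flip (2*m) y) + Pv k x₀ (flip (2*m+1) y) = 0 := by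
    unfold Pv
    have hmem : m ∈ Finset.range k := Finset.mem_range.mpr hm
    rw [← Finset.mul_prod_erase _ _ hmem, ← Finset.mul_prod_erase _ _ hmem]
    have e0 : (∏ m' ∈ (Finset.range k).erase m, ps (zc x₀ (flip (2*m) y) (2*m')) (zc x₀ (flip (2*m) y) (2*m'+1)))
        = ∏ m' ∈ (Finset.range k).erase m, ps (zc x₀ y (2*m')) (zc x₀ y (2*m'+1)) := by
      apply Finset.prod_congr rfl
      intro m' hm'
      rw [Finset.mem_erase, Finset.mem_range] at hm'
      rw [zc_flip x₀ y h0, zc_flip x₀ y h0, if_neg (by omega), if_neg (by omega)]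
    have e1 : (∏ m' ∈ (Finset.range k).erase m, ps (zc x₀ (flip (2*m+1) y) (2*m')) (zc x₀ (flip (2*m+1) y) (2*m'+1)))
        = ∏ m' ∈ (Finset.range k).erase m, ps (zc x₀ y (2*m')) (zc x₀ y (2*m'+1)) := by
      apply Finset.prod_congr rfl
      intro m' hm'
      rw [Finset.mem_erase, Finset.mem_range] at hm'
      rw [zc_flip x₀ y h1, zc_flip x₀ y h1, if_neg (by omega), if_neg (by omega)]
    rw [e0, e1, ← add_mul]
    rw [zc_flip x₀ y h0, zc_flip x₀ y h0, if_pos rfl, if_neg (by omega),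
        zc_flip x₀ y h1, zc_flip x₀ y h1, if_neg (by omega), if_pos rfl]
    rw [ps_cancel]
    ring
  rw [← add_mul, key, zero_mul]

lemma zmod2_add_one_eq_one : ∀ a : ZMod 2, (a + 1 = 1) ↔ a = 0 := by decide

lemma cnt_flip_hi {D k : ℕ} (x₀ y : Vtx D) {j : ℕ} (hj : j ∈ Finset.Ico (2*k) D) :
    ((Finset.Ico (2*k) D).filter (fun j' => zc x₀ (flip j y) j' = 1))
      = if zc x₀ y j = 1
        then ((Finset.Ico (2*k) D).filter (fun j' => zc x₀ y j' = 1)).erase j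
        else insert j ((Finset.Ico (2*k) D).filter (fun j' => zc x₀ y j' = 1)) := by
  have hjD : j < D := (Finset.mem_Ico.mp hj).2
  by_cases hz : zc x₀ y j = 1
  · rw [if_pos hz]
    ext j'
    rw [Finset.mem_erase, Finset.mem_filter, Finset.mem_filter, zc_flip x₀ y hjD]
    by_cases e : j' = j
    · subst e
      rw [if_pos rfl]
      simp [hz, show (1:ZMod 2)+1 ≠ 1 from by decide]
    · rw [if_neg e]
      simp [e]
  · rw [if_neg hz]
    have hz0 : zc x₀ y j = 0 := by rcases zmod2_cases (zc x₀ y j) with h|h; exact h; exact absurd h hz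
    ext j'
    rw [Finset.mem_insert, Finset.mem_filter, Finset.mem_filter, zc_flip x₀ y hjD]
    by_cases e : j' = j
    · subst e
      rw [if_pos rfl]
      simp [hz0, hj, show ((0:ZMod 2))+1 = 1 from by decide]
    · rw [if_neg e]
      simp [e]

lemma adj_wv {D k i : ℕ} (x₀ : Vtx D) (hkD : 2*k ≤ D) :
    (adjCube D).mulVec (wv k i x₀) =
      fun y => (↑D - ↑i - 2*↑k + 1) * (if i = 0 then 0 else wv k (i-1) x₀ y)
        + ((i:ℂ) + 1) * wv k (i+1) x₀ y := by
  funext y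
  rw [adj_mulVec]
  have hsplit : Finset.range D = Finset.range (2*k) ∪ Finset.Ico (2*k) D := by
    rw [Finset.range_eq_Ico, Finset.range_eq_Ico]
    exact (Finset.Ico_union_Ico_eq_Ico (Nat.zero_le _) hkD).symm
  rw [hsplit, Finset.sum_union (by
    rw [Finset.range_eq_Ico]
    exact Finset.Ico_disjoint_Ico_consecutive 0 (2*k) D)]
  have hpair : ∑ j ∈ Finset.range (2*k), wv k i x₀ (flip j y) = 0 := by
    rw [sum_range_pair]
    apply Finset.sum_eq_zero
    intro m hm
    exact pair_cancel x₀ y (Finset.mem_range.mp hm) hkD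
  rw [hpair, zero_add]
  -- free part
  set S := (Finset.Ico (2*k) D).filter (fun j' => zc x₀ y j' = 1) with hS
  have hcnt : cnt k x₀ y = S.card := rfl
  have hScard : S.card ≤ D - 2*k := by
    have := Finset.card_filter_le (Finset.Ico (2*k) D) (fun j' => zc x₀ y j' = 1)
    rwa [Nat.card_Ico] at this
  have hfree : ∀ j ∈ Finset.Ico (2*k) D, wv k i x₀ (flip j y) =
      Pv k x₀ y * (if zc x₀ y j = 1 then (if S.card = i + 1 then 1 else 0)
        else (if S.card + 1 = i then 1 else 0)) := by
    intro j hj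
    have hjD : j < D := (Finset.mem_Ico.mp hj).2
    have hjk : 2*k ≤ j := (Finset.mem_Ico.mp hj).1
    unfold wv
    rw [Pv_flip_hi x₀ y hjD hjk]
    congr 1
    have hc : cnt k x₀ (flip j y)
        = if zc x₀ y j = 1 then S.card - 1 else S.card + 1 := by
      unfold cnt
      rw [cnt_flip_hi x₀ y hj]
      by_cases hz : zc x₀ y j = 1
      · rw [if_pos hz, if_pos hz, ← hS, Finset.card_erase_of_mem]
        rw [hS, Finset.mem_filter]; exact ⟨hj, hz⟩
      · rw [if_neg hz, if_neg hz, ← hS, Finset.card_insert_of_notMem]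
        rw [hS, Finset.mem_filter]
        intro h
        exact hz h.2
    rw [hc]
    by_cases hz : zc x₀ y j = 1
    · rw [if_pos hz, if_pos hz]
      have hpos : 1 ≤ S.card := by
        have : j ∈ S := by rw [hS, Finset.mem_filter]; exact ⟨hj, hz⟩
        exact Finset.card_pos.mpr ⟨j, this⟩
      congr 1
      rw [eq_iff_iff]
      omega
    · rw [if_neg hz, if_neg hz]
  rw [Finset.sum_congr rfl hfree]
  rw [← Finset.sum_filter_add_sum_filter_not (Finset.Ico (2*k) D) (fun j' => zc x₀ y j' = 1)]
  have e1 : ∑ j ∈ S, (Pv k x₀ y * (if zc x₀ y j = 1 then (if S.card = i + 1 then 1 else 0)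
        else (if S.card + 1 = i then 1 else 0)))
      = (S.card : ℂ) * (Pv k x₀ y * (if S.card = i + 1 then 1 else 0)) := by
    have h : ∀ j ∈ S, Pv k x₀ y * (if zc x₀ y j = 1 then (if S.card = i + 1 then (1:ℂ) else 0)
        else (if S.card + 1 = i then 1 else 0)) = Pv k x₀ y * (if S.card = i + 1 then 1 else 0) := by
      intro j hj
      rw [hS, Finset.mem_filter] at hj
      rw [if_pos hj.2]
    rw [Finset.sum_congr rfl h, Finset.sum_const, nsmul_eq_mul]
  have e2 : ∑ j ∈ (Finset.Ico (2*k) D).filter (fun j' => ¬ zc x₀ y j' = 1),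
        (Pv k x₀ y * (if zc x₀ y j = 1 then (if S.card = i + 1 then 1 else 0)
        else (if S.card + 1 = i then 1 else 0)))
      = ((D - 2*k - S.card : ℕ) : ℂ) * (Pv k x₀ y * (if S.card + 1 = i then 1 else 0)) := by
    have h : ∀ j ∈ (Finset.Ico (2*k) D).filter (fun j' => ¬ zc x₀ y j' = 1),
        Pv k x₀ y * (if zc x₀ y j = 1 then (if S.card = i + 1 then (1:ℂ) else 0)
        else (if S.card + 1 = i then 1 else 0)) = Pv k x₀ y * (if S.card + 1 = i then 1 else 0) := by
      intro j hj
      rw [Finset.mem_filter] at hj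
      rw [if_neg hj.2]
    rw [Finset.sum_congr rfl h, Finset.sum_const, nsmul_eq_mul]
    congr 2
    have := Finset.card_filter_add_card_filter_not (s := Finset.Ico (2*k) D)
      (p := fun j' => zc x₀ y j' = 1)
    rw [Nat.card_Ico] at this
    rw [← hS] at this
    omega
  rw [e1, e2]
  unfold wv
  rw [← hcnt]
  have hA : ¬ (cnt k x₀ y + 1 = i) →
      (if i = 0 then (0:ℂ) else Pv k x₀ y * (if cnt k x₀ y = i-1 then 1 else 0)) = 0 := by
    intro hn
    by_cases h0 : i = 0
    · rw [if_pos h0]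
    · rw [if_neg h0, if_neg (by omega), mul_zero]
  by_cases h1 : cnt k x₀ y = i + 1
  · have h2 : ¬ (cnt k x₀ y + 1 = i) := by omega
    rw [if_pos h1, if_neg h2, hA h2, h1]
    push_cast
    ring
  · by_cases h2 : cnt k x₀ y + 1 = i
    · rw [if_neg h1, if_pos h2, if_neg (show ¬ i = 0 by omega),
        if_pos (show cnt k x₀ y = i - 1 by omega)]
      have hc : ((D - 2*k - cnt k x₀ y : ℕ) : ℂ) = (D : ℂ) - 2*(k:ℂ) - (cnt k x₀ y : ℂ) := by
        rw [Nat.cast_sub (by rw [hcnt]; exact hScard), Nat.cast_sub (by omega : 2*k ≤ D)]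
        push_cast
        ring
      have hi : (i : ℂ) = (cnt k x₀ y : ℂ) + 1 := by exact_mod_cast congrArg (Nat.cast (R := ℂ)) h2.symm
      rw [hc, hi]
      ring
    · rw [if_neg h1, if_neg h2, hA h2]
      ring

lemma ps_ne_zero : ∀ a b : ZMod 2, ps a b ≠ 0 → ((a = 1 ∧ b = 0) ∨ (a = 0 ∧ b = 1)) := by
  intro a b
  rcases zmod2_cases a with ha|ha <;> rcases zmod2_cases b with hb|hb <;> subst ha <;> subst hb <;>
    simp (config := { decide := true }) [ps]

lemma cnt_le {D k : ℕ} (x₀ y : Vtx D) : cnt k x₀ y ≤ D - 2*k := by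
  unfold cnt
  have := Finset.card_filter_le (Finset.Ico (2*k) D) (fun j => zc x₀ y j = 1)
  rwa [Nat.card_Ico] at this

lemma wv_zero {D k i : ℕ} (x₀ : Vtx D) (hi : D - 2*k < i) : wv k i x₀ = 0 := by
  funext y
  unfold wv
  rw [if_neg (by have := cnt_le (k := k) x₀ y; omega), mul_zero]
  simp

lemma hamming_eq {D k i : ℕ} (x₀ y : Vtx D) (hkD : 2*k ≤ D)
    (hP : Pv k x₀ y ≠ 0) (hc : cnt k x₀ y = i) : hammingNorm (x₀ - y) = k + i := by
  have h1 : hammingNorm (x₀ - y) = ∑ j ∈ Finset.range D, (if zc x₀ y j ≠ 0 then 1 else 0) := by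
    unfold hammingNorm
    rw [Finset.card_filter, ← Fin.sum_univ_eq_sum_range (fun j => if zc x₀ y j ≠ 0 then 1 else 0)]
    apply Finset.sum_congr rfl
    intro j _
    have hz : zc x₀ y j.val = (x₀ - y) j := by
      unfold zc
      rw [dif_pos j.isLt, Fin.eta, Pi.sub_apply, zmod2_sub]
    rw [hz]
  rw [h1]
  have hsplit : Finset.range D = Finset.range (2*k) ∪ Finset.Ico (2*k) D := by
    rw [Finset.range_eq_Ico, Finset.range_eq_Ico]
    exact (Finset.Ico_union_Ico_eq_Ico (Nat.zero_le _) hkD).symm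
  rw [hsplit, Finset.sum_union (by
    rw [Finset.range_eq_Ico]
    exact Finset.Ico_disjoint_Ico_consecutive 0 (2*k) D)]
  have hpairs : ∑ j ∈ Finset.range (2*k), (if zc x₀ y j ≠ 0 then 1 else 0) = k := by
    have hone : ∀ m ∈ Finset.range k,
        ((if zc x₀ y (2*m) ≠ 0 then 1 else 0) + if zc x₀ y (2*m+1) ≠ 0 then 1 else 0) = 1 := by
      intro m hm
      have hps : ps (zc x₀ y (2*m)) (zc x₀ y (2*m+1)) ≠ 0 :=
        Finset.prod_ne_zero_iff.mp hP m hm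
      rcases ps_ne_zero _ _ hps with ⟨ha, hb⟩ | ⟨ha, hb⟩ <;> rw [ha, hb] <;>
        simp (config := { decide := true })
    rw [sum_range_pair, Finset.sum_congr rfl hone, Finset.sum_const, smul_eq_mul, mul_one,
      Finset.card_range]
  have hfrees : ∑ j ∈ Finset.Ico (2*k) D, (if zc x₀ y j ≠ 0 then 1 else 0) = i := by
    rw [← hc]
    unfold cnt
    rw [Finset.card_filter]
    apply Finset.sum_congr rfl
    intro j _
    congr 1
    rw [eq_iff_iff]
    constructor
    · intro h; exact zmod2_ne_zero _ h
    · intro h; rw [h]; decide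
  rw [hpairs, hfrees]

lemma dual_wv {D k i : ℕ} (x₀ : Vtx D) (hkD : 2*k ≤ D) :
    (dualCube D x₀).mulVec (wv k i x₀) = ((D:ℂ) - 2*((i:ℂ)+(k:ℂ))) • wv k i x₀ := by
  funext y
  rw [Pi.smul_apply, smul_eq_mul]
  unfold dualCube
  rw [Matrix.mulVec_diagonal]
  by_cases h : wv k i x₀ y = 0
  · rw [h, mul_zero, mul_zero]
  · have hP : Pv k x₀ y ≠ 0 := fun h0 => h (by unfold wv; rw [h0, zero_mul])
    have hc : cnt k x₀ y = i := by
      by_contra hcc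
      exact h (by unfold wv; rw [if_neg hcc, mul_zero])
    rw [hamming_eq x₀ y hkD hP hc]
    push_cast
    ring

def pat (k i : ℕ) (j : ℕ) : ZMod 2 :=
  if j < 2*k then (if j % 2 = 0 then 1 else 0) else if j < 2*k + i then 1 else 0

def yw {D : ℕ} (k i : ℕ) (x₀ : Vtx D) : Vtx D := fun j => x₀ j + pat k i j.val

lemma zc_yw {D k i : ℕ} (x₀ : Vtx D) {j : ℕ} (h : j < D) :
    zc x₀ (yw k i x₀) j = pat k i j := by
  unfold zc yw
  rw [dif_pos h]
  exact (by decide : ∀ a b : ZMod 2, a + (a + b) = b) _ _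

lemma Pv_yw {D k i : ℕ} (x₀ : Vtx D) (hkD : 2*k ≤ D) : Pv k (x₀ := x₀) (yw k i x₀) = 1 := by
  unfold Pv
  rw [Finset.prod_congr rfl (fun m hm => ?_), Finset.prod_const_one]
  rw [Finset.mem_range] at hm
  rw [zc_yw x₀ (by omega), zc_yw x₀ (by omega)]
  have h1 : pat k i (2*m) = 1 := by
    unfold pat
    rw [if_pos (by omega), if_pos (by omega)]
  have h2 : pat k i (2*m+1) = 0 := by
    unfold pat
    rw [if_pos (by omega), if_neg (by omega)]
  rw [h1, h2]
  simp (config := { decide := true }) [ps]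

lemma cnt_yw {D k i : ℕ} (x₀ : Vtx D) (h : 2*k + i ≤ D) : cnt k (x₀ := x₀) (yw k i x₀) = i := by
  unfold cnt
  have hcong : (Finset.Ico (2*k) D).filter (fun j => zc x₀ (yw k i x₀) j = 1)
      = (Finset.Ico (2*k) D).filter (fun j => j < 2*k + i) := by
    apply Finset.filter_congr
    intro j hj
    rw [Finset.mem_Ico] at hj
    rw [zc_yw x₀ hj.2]
    unfold pat
    rw [if_neg (by omega)]
    by_cases hi : j < 2*k + i
    · rw [if_pos hi]
      simp [hi]
    · rw [if_neg hi]
      simp [hi, (by decide : (0:ZMod 2) ≠ 1)]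
  rw [hcong]
  have : (Finset.Ico (2*k) D).filter (fun j => j < 2*k + i) = Finset.Ico (2*k) (2*k+i) := by
    ext j
    simp [Finset.mem_filter, Finset.mem_Ico]
    omega
  rw [this, Nat.card_Ico]
  omega

lemma wv_yw {D k : ℕ} (x₀ : Vtx D) {i : ℕ} (hi : 2*k + i ≤ D) (jn : ℕ) :
    wv k jn x₀ (yw k i x₀) = if i = jn then 1 else 0 := by
  unfold wv
  rw [Pv_yw x₀ (by omega), cnt_yw x₀ hi, one_mul]

lemma adj_wv' {D k i : ℕ} (x₀ : Vtx D) (hkD : 2*k ≤ D) :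
    (adjCube D).mulVec (wv k i x₀) =
      ((D:ℂ) - (i:ℂ) - 2*(k:ℂ) + 1) • (if i = 0 then (0 : Vtx D → ℂ) else wv k (i-1) x₀)
      + ((i:ℂ) + 1) • wv k (i+1) x₀ := by
  funext y
  rw [congrFun (adj_wv x₀ hkD) y]
  simp only [Pi.add_apply, Pi.smul_apply, smul_eq_mul]
  congr 2
  by_cases h0 : i = 0
  · rw [if_pos h0, if_pos h0]
    rfl
  · rw [if_neg h0, if_neg h0]

lemma matinv_span {n : Type*} [Fintype n] (M : Matrix n n ℂ) (s : Set (n → ℂ))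
    (h : ∀ x ∈ s, M.mulVec x ∈ Submodule.span ℂ s) : MatInvariant M (Submodule.span ℂ s) := by
  intro v hv
  induction hv using Submodule.span_induction with
  | mem x hx => exact h x hx
  | zero => rw [Matrix.mulVec_zero]; exact Submodule.zero_mem _
  | add x y _ _ hx hy => rw [Matrix.mulVec_add]; exact Submodule.add_mem _ hx hy
  | smul c x _ hx => rw [Matrix.mulVec_smul]; exact Submodule.smul_mem _ _ hx

/-- eigenvalue of `wv k i` for the dual matrix -/
noncomputable def lam (D k i : ℕ) : ℂ := (D:ℂ) - 2*((i:ℂ)+(k:ℂ))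

lemma lam_sub_ne_zero {D k : ℕ} {a b : ℕ} (hab : a ≠ b) : lam D k a - lam D k b ≠ 0 := by
  intro h
  apply hab
  have h2 : ((a:ℂ) - (b:ℂ)) * (-2) = 0 := by
    unfold lam at h
    linear_combination h
  rcases mul_eq_zero.mp h2 with h3 | h3
  · have : (a:ℂ) = (b:ℂ) := by linear_combination h3
    exact_mod_cast this
  · norm_num at h3

lemma extract {D k : ℕ} (x₀ : Vtx D) (hkD : 2*k ≤ D) (U : Submodule ℂ (Vtx D → ℂ))
    (hU : MatInvariant (dualCube D x₀) U) (S : Finset ℕ) :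
    ∀ c : ℕ → ℂ, (∑ i ∈ S, c i • wv k i x₀) ∈ U → ∀ i ∈ S, c i • wv k i x₀ ∈ U := by
  induction S using Finset.strongInduction with
  | _ S ih =>
    intro c hv i hi
    have hmap : (dualCube D x₀).mulVec (∑ i' ∈ S, c i' • wv k i' x₀)
        = ∑ i' ∈ S, (c i' * lam D k i') • wv k i' x₀ := by
      have h1 : (dualCube D x₀).mulVec (∑ i' ∈ S, c i' • wv k i' x₀)
          = ∑ i' ∈ S, c i' • (dualCube D x₀).mulVec (wv k i' x₀) := by
        rw [show (dualCube D x₀).mulVec (∑ i' ∈ S, c i' • wv k i' x₀)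
            = (dualCube D x₀).mulVecLin (∑ i' ∈ S, c i' • wv k i' x₀) from rfl, map_sum]
        exact Finset.sum_congr rfl fun i' _ => by rw [_root_.map_smul]; rfl
      rw [h1]
      exact Finset.sum_congr rfl fun i' _ => by
        rw [dual_wv x₀ hkD, smul_smul]; rfl
    have hv2 : (∑ i' ∈ S.erase i, (c i' * (lam D k i' - lam D k i)) • wv k i' x₀) ∈ U := by
      have hmem : (dualCube D x₀).mulVec (∑ i' ∈ S, c i' • wv k i' x₀)
          - lam D k i • (∑ i' ∈ S, c i' • wv k i' x₀) ∈ U :=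
        Submodule.sub_mem _ (hU _ hv) (Submodule.smul_mem _ _ hv)
      have heq : (dualCube D x₀).mulVec (∑ i' ∈ S, c i' • wv k i' x₀)
          - lam D k i • (∑ i' ∈ S, c i' • wv k i' x₀)
          = ∑ i' ∈ S.erase i, (c i' * (lam D k i' - lam D k i)) • wv k i' x₀ := by
        rw [hmap, Finset.smul_sum, ← Finset.sum_sub_distrib]
        rw [Finset.sum_erase_eq_sub (f := fun i' => (c i' * (lam D k i' - lam D k i)) • wv k i' x₀) hi]
        rw [show (c i * (lam D k i - lam D k i)) • wv k i x₀ = 0 by rw [sub_self, mul_zero, zero_smul]]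
        rw [sub_zero]
        exact Finset.sum_congr rfl fun i' _ => by
          rw [smul_smul, ← sub_smul]
          congr 1
          ring
      rwa [heq] at hmem
    have step : ∀ i' ∈ S.erase i, c i' • wv k i' x₀ ∈ U := by
      intro i' hi'
      have h1 := ih (S.erase i) (Finset.erase_ssubset hi) _ hv2 i' hi'
      have hnz := lam_sub_ne_zero (D := D) (k := k) (Finset.ne_of_mem_erase hi')
      have h2 : c i' • wv k i' x₀
          = (lam D k i' - lam D k i)⁻¹ • ((c i' * (lam D k i' - lam D k i)) • wv k i' x₀) := by
        rw [smul_smul]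
        congr 1
        field_simp
      rw [h2]
      exact Submodule.smul_mem _ _ h1
    have hsum : c i • wv k i x₀
        = (∑ i' ∈ S, c i' • wv k i' x₀) - ∑ i' ∈ S.erase i, c i' • wv k i' x₀ := by
      rw [← Finset.add_sum_erase _ _ hi, add_sub_cancel_right]
    rw [hsum]
    exact Submodule.sub_mem _ hv (Submodule.sum_mem _ step)

end S17

open S17 in
theorem stmt17 (D : ℕ) (hD : 3 ≤ D) (x₀ : Vtx D) (k : ℕ) (hkD : k ≤ D / 2) :
    ∃ L : Submodule ℂ (Vtx D → ℂ),
      Module.finrank ℂ L = D - 2 * k + 1 ∧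
      MatInvariant (adjCube D) L ∧
      MatInvariant (dualCube D x₀) L ∧
      (∀ U : Submodule ℂ (Vtx D → ℂ), U ≤ L →
        MatInvariant (adjCube D) U → MatInvariant (dualCube D x₀) U → U = ⊥ ∨ U = L) ∧
      ∃ w : ℕ → (Vtx D → ℂ),
        (∀ i ≤ D - 2 * k, w i ∈ L) ∧
        LinearIndependent ℂ (fun i : Fin (D - 2 * k + 1) => w i) ∧
        Submodule.span ℂ (w '' Set.Iic (D - 2 * k)) = L ∧
        w (D - 2 * k + 1) = 0 ∧
        (∀ i ≤ D - 2 * k,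
          (adjCube D).mulVec (w i) =
            ((D : ℂ) - i - 2 * k + 1) • (if i = 0 then 0 else w (i - 1)) +
            ((i : ℂ) + 1) • w (i + 1)) ∧
        (∀ i ≤ D - 2 * k,
          (dualCube D x₀).mulVec (w i) = ((D : ℂ) - 2 * ((i : ℂ) + k)) • w i) := by
  have h2k : 2*k ≤ D := by omega
  set n := D - 2 * k with hn
  set W : ℕ → (Vtx D → ℂ) := fun i => wv k i x₀ with hW
  set L : Submodule ℂ (Vtx D → ℂ) := Submodule.span ℂ (W '' Set.Iic n) with hL
  have hWmem : ∀ i ≤ n, W i ∈ L :=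
    fun i hi => Submodule.subset_span ⟨i, Set.mem_Iic.mpr hi, rfl⟩
  have himg : W '' Set.Iic n = Set.range (fun i : Fin (n+1) => W i.val) := by
    ext v
    constructor
    · rintro ⟨i, hi, rfl⟩
      exact ⟨⟨i, by have := Set.mem_Iic.mp hi; omega⟩, rfl⟩
    · rintro ⟨i, rfl⟩
      exact ⟨i.val, Set.mem_Iic.mpr (by omega), rfl⟩
  -- evaluation at witness vertices
  have heval : ∀ i ≤ n, ∀ jn : ℕ, W jn (yw k i x₀) = if i = jn then 1 else 0 := by
    intro i hi jn
    exact wv_yw x₀ (by omega) jn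
  have hli : LinearIndependent ℂ (fun i : Fin (n+1) => W i.val) := by
    rw [Fintype.linearIndependent_iff]
    intro g hg i
    have h0 := congrFun hg (yw k i.val x₀)
    rw [Finset.sum_apply] at h0
    have h1 : ∀ j : Fin (n+1), (g j • W j.val) (yw k i.val x₀) = if i = j then g j else 0 := by
      intro j
      rw [Pi.smul_apply, smul_eq_mul, heval i.val (by omega) j.val]
      by_cases e : i = j
      · rw [if_pos e, if_pos (by rw [e]), mul_one]
      · rw [if_neg e, if_neg (fun h => e (Fin.ext h)), mul_zero]
    rw [Finset.sum_congr rfl (fun j _ => h1 j), Finset.sum_ite_eq] at h0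
    rw [if_pos (Finset.mem_univ i)] at h0
    exact h0
  have hrank : Module.finrank ℂ L = n + 1 := by
    rw [hL, himg, finrank_span_eq_card hli, Fintype.card_fin]
  -- adjacency action on generators
  have hadj : ∀ i : ℕ, (adjCube D).mulVec (W i) =
      ((D : ℂ) - i - 2 * k + 1) • (if i = 0 then 0 else W (i - 1)) + ((i : ℂ) + 1) • W (i + 1) := by
    intro i
    exact adj_wv' x₀ h2k
  have hdual : ∀ i : ℕ, (dualCube D x₀).mulVec (W i) = ((D : ℂ) - 2 * ((i : ℂ) + k)) • W i := by
    intro i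
    exact dual_wv x₀ h2k
  have hWn1 : W (n + 1) = 0 := wv_zero x₀ (by omega)
  have hWz : ∀ i, n < i → W i = 0 := fun i hi => wv_zero x₀ (by omega)
  have hadjmem : ∀ i ≤ n, (adjCube D).mulVec (W i) ∈ L := by
    intro i hi
    rw [hadj i]
    have h1 : (if i = 0 then 0 else W (i - 1)) ∈ L := by
      by_cases e : i = 0
      · rw [if_pos e]; exact Submodule.zero_mem _
      · rw [if_neg e]; exact hWmem _ (by omega)
    have h2 : W (i + 1) ∈ L := by
      by_cases e : i + 1 ≤ n
      · exact hWmem _ e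
      · rw [hWz (i+1) (by omega)]; exact Submodule.zero_mem _
    exact Submodule.add_mem _ (Submodule.smul_mem _ _ h1) (Submodule.smul_mem _ _ h2)
  have hinvA : MatInvariant (adjCube D) L := by
    apply matinv_span
    rintro x ⟨i, hi, rfl⟩
    exact hadjmem i (Set.mem_Iic.mp hi)
  have hinvB : MatInvariant (dualCube D x₀) L := by
    apply matinv_span
    rintro x ⟨i, hi, rfl⟩
    rw [hdual i]
    exact Submodule.smul_mem _ _ (hWmem i (Set.mem_Iic.mp hi))
  refine ⟨L, hrank, hinvA, hinvB, ?_, W, hWmem, hli, rfl, hWn1, fun i _ => hadj i, fun i _ => hdual i⟩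
  -- minimality
  intro U hUL hUA hUB
  by_cases hbot : U = ⊥
  · exact Or.inl hbot
  right
  -- get a nonzero vector
  obtain ⟨v, hvU, hvne⟩ := Submodule.exists_mem_ne_zero_of_ne_bot hbot
  have hvL : v ∈ L := hUL hvU
  rw [hL, himg, Submodule.mem_span_range_iff_exists_fun] at hvL
  obtain ⟨c, hc⟩ := hvL
  set cc : ℕ → ℂ := fun i => if h : i < n + 1 then c ⟨i, h⟩ else 0 with hcc
  have hsum : (∑ i ∈ Finset.range (n+1), cc i • W i) = v := by
    rw [← hc, ← Fin.sum_univ_eq_sum_range (fun i => cc i • W i)]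
    apply Finset.sum_congr rfl
    intro j _
    rw [hcc]
    simp only [j.isLt, dif_pos, Fin.eta]
  have hext := extract x₀ h2k U hUB (Finset.range (n+1)) cc (by rw [hsum]; exact hvU)
  -- some coefficient is nonzero
  have hex : ∃ i ≤ n, cc i ≠ 0 := by
    by_contra hno
    push_neg at hno
    apply hvne
    rw [← hsum]
    apply Finset.sum_eq_zero
    intro i hi
    rw [hno i (by rw [Finset.mem_range] at hi; omega), zero_smul]
  obtain ⟨i₀, hi₀n, hi₀⟩ := hex
  have hWi₀ : W i₀ ∈ U := by
    have h1 := hext i₀ (Finset.mem_range.mpr (by omega))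
    have h2 : W i₀ = (cc i₀)⁻¹ • (cc i₀ • W i₀) := by
      rw [smul_smul, inv_mul_cancel₀ hi₀, one_smul]
    rw [h2]
    exact Submodule.smul_mem _ _ h1
  -- neighbor propagation
  have hcast : ∀ i : ℕ, i ≤ n → ((D : ℂ) - i - 2 * k + 1) ≠ 0 := by
    intro i hi
    have h1 : ((D - 2*k - i + 1 : ℕ) : ℂ) = (D : ℂ) - i - 2 * k + 1 := by
      push_cast [Nat.cast_sub (by omega : i ≤ D - 2*k), Nat.cast_sub h2k]
      ring
    rw [← h1]
    exact Nat.cast_ne_zero.mpr (by omega)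
  have nb : ∀ j ≤ n, W j ∈ U → (1 ≤ j → W (j-1) ∈ U) ∧ (j < n → W (j+1) ∈ U) := by
    intro j hj hWj
    have hAWj : (adjCube D).mulVec (W j) ∈ U := hUA _ hWj
    rw [hadj j] at hAWj
    by_cases e0 : j = 0
    · subst e0
      constructor
      · intro h; omega
      · intro hjn
        rw [if_pos rfl, smul_zero, zero_add] at hAWj
        have : W 1 = ((0:ℂ)+1)⁻¹ • (((0:ℕ):ℂ)+1) • W (0+1) := by
          norm_num
        rw [show (0+1 : ℕ) = 1 from rfl] at hAWj ⊢
        rw [this]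
        exact Submodule.smul_mem _ _ hAWj
    · rw [if_neg e0] at hAWj
      by_cases ejn : j = n
      · subst ejn
        constructor
        · intro _
          rw [show W (n+1) = 0 from hWn1, smul_zero, add_zero] at hAWj
          have : W (n-1) = ((D : ℂ) - n - 2 * k + 1)⁻¹ • (((D : ℂ) - n - 2 * k + 1) • W (n-1)) := by
            rw [smul_smul, inv_mul_cancel₀ (hcast n le_rfl), one_smul]
          rw [this]
          exact Submodule.smul_mem _ _ hAWj
        · intro h; omega
      · -- 1 ≤ j < n
        have hjn : j < n := by omega
        have hj1 : 1 ≤ j := by omega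
        set cf : ℕ → ℂ := fun t => if t = j - 1 then ((D : ℂ) - j - 2 * k + 1) else ((j:ℂ)+1)
          with hcf
        have hne : j - 1 ≠ j + 1 := by omega
        have hsum2 : (∑ t ∈ ({j-1, j+1} : Finset ℕ), cf t • W t) ∈ U := by
          rw [Finset.sum_pair hne]
          rw [hcf]
          simp only [if_pos rfl, if_neg (show ¬ (j+1 = j-1) by omega)]
          exact hAWj
        have hext2 := extract x₀ h2k U hUB _ _ hsum2
        constructor
        · intro _
          have h1 := hext2 (j-1) (by simp)
          rw [hcf] at h1
          simp only [if_pos rfl] at h1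
          have h2 : W (j-1) = ((D : ℂ) - j - 2 * k + 1)⁻¹ • (((D : ℂ) - j - 2 * k + 1) • W (j-1)) := by
            rw [smul_smul, inv_mul_cancel₀ (hcast j (by omega)), one_smul]
          rw [h2]
          exact Submodule.smul_mem _ _ h1
        · intro _
          have h1 := hext2 (j+1) (by simp)
          rw [hcf] at h1
          simp only [if_neg (show ¬ (j+1 = j-1) by omega)] at h1
          have hb : ((j:ℂ)+1) ≠ 0 := by
            have : ((j+1 : ℕ) : ℂ) = (j:ℂ)+1 := by push_cast; ring
            rw [← this]
            exact Nat.cast_ne_zero.mpr (by omega)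
          have h2 : W (j+1) = ((j:ℂ)+1)⁻¹ • (((j:ℂ)+1) • W (j+1)) := by
            rw [smul_smul, inv_mul_cancel₀ hb, one_smul]
          rw [h2]
          exact Submodule.smul_mem _ _ h1
  -- downward to 0
  have hdown : ∀ d : ℕ, d ≤ i₀ → W (i₀ - d) ∈ U := by
    intro d
    induction d with
    | zero => intro _; simpa using hWi₀
    | succ m ihm =>
        intro hm
        have h1 := ihm (by omega)
        have h2 := (nb (i₀ - m) (by omega) h1).1 (by omega)
        have : i₀ - (m+1) = i₀ - m - 1 := by omega
        rw [this]
        exact h2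
  have hW0 : W 0 ∈ U := by
    have := hdown i₀ le_rfl
    rwa [Nat.sub_self] at this
  have hup : ∀ j ≤ n, W j ∈ U := by
    intro j
    induction j with
    | zero => intro _; exact hW0
    | succ m ihm =>
        intro hm
        have h1 := ihm (by omega)
        exact (nb m (by omega) h1).2 (by omega)
  -- conclude
  apply le_antisymm hUL
  rw [hL]
  rw [Submodule.span_le]
  rintro x ⟨i, hi, rfl⟩
  exact hup i (Set.mem_Iic.mp hi)
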